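/- Let I be a squarefree monomial ideal in K[x_1,...,x_n] with minimal monomial generating set M of cardinality μ(I). Define ν(I) = min over minimal primes I_j of (max over variables x_i ∈ I_j of |{f ∈ M : x_i divides f}|), and τ(I) = max over minimal primes I_j of height(I_j). Then μ(I) ≤ ν(I)·τ(I). -/
import Mathlib


open MvPolynomial

theorem mu_le_nu_mul_tau {K : Type*} [Field K] (n : ℕ)
    (M : Finset (Finset (Fin n))) (I : Ideal (MvPolynomial (Fin n) K))
    -- `M` is the minimal generating set of squarefree monomials for `I`
    (hI : I = Ideal.span ((fun S => ∏ i ∈ S, X i) '' (M : Set (Finset (Fin n)))))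
    (hmin : ∀ M' : Finset (Finset (Fin n)), M' ⊂ M →
      Ideal.span ((fun S => ∏ i ∈ S, X i) '' (M' : Set (Finset (Fin n)))) ≠ I)
    -- the minimal primes of `I` are exactly the ideals generated by the sets of
    -- variables listed in `primes`; the height of such a prime is the number of variables
    (primes : Finset (Finset (Fin n))) (hne : primes.Nonempty)
    (hprimes : ∀ p : Ideal (MvPolynomial (Fin n) K), p ∈ I.minimalPrimes ↔
      ∃ S ∈ primes, p = Ideal.span ((fun i => (X i : MvPolynomial (Fin n) K)) '' S)) :
    M.card ≤
      primes.inf' hne (fun S => S.sup fun i => (M.filter fun m => i ∈ m).card) *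
        primes.sup' hne (fun S => S.card) := by
  -- choose S achieving the inf'
  obtain ⟨S, hS, hSeq⟩ := Finset.exists_mem_eq_inf' hne
    (fun S => S.sup fun i => (M.filter fun m => i ∈ m).card)
  -- the ideal generated by X i, i ∈ S, is a minimal prime of I
  have hmp : Ideal.span ((fun i => (X i : MvPolynomial (Fin n) K)) '' S) ∈ I.minimalPrimes :=
    (hprimes _).mpr ⟨S, hS, rfl⟩
  have hIle : I ≤ Ideal.span ((fun i => (X i : MvPolynomial (Fin n) K)) '' S) := hmp.1.2
  -- every m ∈ M meets S
  have hmeet : ∀ m ∈ M, ∃ i ∈ S, i ∈ m := by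
    intro m hm
    have hmem : (∏ i ∈ m, (X i : MvPolynomial (Fin n) K)) ∈ I := by
      rw [hI]
      exact Ideal.subset_span ⟨m, hm, rfl⟩
    have := hIle hmem
    rw [show ((fun i => (X i : MvPolynomial (Fin n) K)) '' S) = MvPolynomial.X '' (S : Set (Fin n)) from rfl,
      mem_ideal_span_X_image] at this
    have hprod : (∏ i ∈ m, (X i : MvPolynomial (Fin n) K)) =
        monomial (∑ i ∈ m, Finsupp.single i 1) 1 := by
      rw [monomial_sum_one]
      rfl
    have hsupp : (∑ i ∈ m, Finsupp.single i (1 : ℕ)) ∈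
        (∏ i ∈ m, (X i : MvPolynomial (Fin n) K)).support := by
      rw [hprod]
      simp [support_monomial]
    obtain ⟨i, hiS, hine⟩ := this _ hsupp
    refine ⟨i, hiS, ?_⟩
    by_contra him
    apply hine
    rw [Finsupp.coe_finset_sum, Finset.sum_apply]
    exact Finset.sum_eq_zero fun j hj => by
      rw [Finsupp.single_apply, if_neg]
      rintro rfl; exact him hj
  -- combinatorial counting
  have hsub : M ⊆ S.biUnion (fun i => M.filter fun m => i ∈ m) := by
    intro m hm
    obtain ⟨i, hiS, him⟩ := hmeet m hm
    exact Finset.mem_biUnion.mpr ⟨i, hiS, Finset.mem_filter.mpr ⟨hm, him⟩⟩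
  calc M.card ≤ (S.biUnion (fun i => M.filter fun m => i ∈ m)).card :=
        Finset.card_le_card hsub
    _ ≤ ∑ i ∈ S, (M.filter fun m => i ∈ m).card := Finset.card_biUnion_le
    _ ≤ S.card * (S.sup fun i => (M.filter fun m => i ∈ m).card) := by
        calc ∑ i ∈ S, (M.filter fun m => i ∈ m).card
            ≤ S.card • (S.sup fun i => (M.filter fun m => i ∈ m).card) :=
              Finset.sum_le_card_nsmul _ _ _ fun i hi => Finset.le_sup (f := fun i => (M.filter fun m => i ∈ m).card) hi
          _ = _ := smul_eq_mul ..
    _ ≤ (primes.inf' hne (fun S => S.sup fun i => (M.filter fun m => i ∈ m).card)) *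
        (primes.sup' hne (fun S => S.card)) := by
        rw [mul_comm]
        exact Nat.mul_le_mul (le_of_eq hSeq.symm) (Finset.le_sup' _ hS)
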